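/- If a Turing machine T is bounded-zigzag (there exists N such that T makes no zigzag, left or right, of width greater than N), then the language of the trace subshift S_T = τ_T(X_T) ⊆ (Q × A)^ℕ is recognized by a deterministic pushdown automaton. -/

import Mathlib

/-- A Turing machine with tape alphabet `A`, state set `Q`, and rule
`δ : A × Q → A × Q × {-1,1}` (the direction is encoded by a `Bool`). -/
structure TuringMachine (A Q : Type*) where
  δ : A → Q → A × Q × Bool

namespace TuringMachine

variable {A Q : Type*}

/-- Direction of a move: `true ↦ +1`, `false ↦ -1`. -/
def dir (b : Bool) : ℤ := if b then 1 else -1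

/-- A configuration: tape contents, head state, head position. -/
abbrev Config (A Q : Type*) := (ℤ → A) × Q × ℤ

/-- One step of the machine on `X = A^ℤ × Q × ℤ`. -/
def step (M : TuringMachine A Q) (c : Config A Q) : Config A Q :=
  let r := M.δ (c.1 c.2.2) c.2.1
  (Function.update c.1 c.2.2 r.1, r.2.1, c.2.2 + dir r.2.2)

/-- Head position after `t` steps. -/
def pos (M : TuringMachine A Q) (t : ℕ) (c : Config A Q) : ℤ :=
  ((M.step)^[t] c).2.2

/-- `c` is preperiodic for the machine. -/
def Preperiodic (M : TuringMachine A Q) (c : Config A Q) : Prop :=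
  ∃ m p : ℕ, 0 < p ∧ (M.step)^[m + p] c = (M.step)^[m] c

end TuringMachine

namespace TuringMachine

/-- The trace word of a configuration: at each time, the symbol under the head
and the current state (the letters of the subshift S_T). -/
def trace {A Q : Type*} (M : TuringMachine A Q) (x : Config A Q) (t : ℕ) :
    A × Q :=
  let c := (M.step)^[t] x
  (c.1 c.2.2, c.2.1)

/-- The language of finite factors of the trace subshift S_T. -/
def langST {A Q : Type*} (M : TuringMachine A Q) : Language (A × Q) :=
  {w : List (A × Q) | ∃ (x : Config A Q) (m : ℕ),
    ∀ j : ℕ, ∀ hj : j < w.length, w.get ⟨j, hj⟩ = M.trace x (m + j)}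

end TuringMachine

/-- A deterministic pushdown automaton, following the paper: finite state set,
finite stack alphabet with a bottom symbol, a deterministic transition pushing
words of length at most 2, the bottom symbol being kept exactly at the bottom. -/
structure DPDA (α : Type*) where
  Ω : Type
  Γ : Type
  finΩ : Fintype Ω
  finΓ : Fintype Γ
  bot : Γ
  init : Ω
  final : Set Ω
  trans : α → Ω → Γ → Ω × List Γ
  len_le : ∀ a o β, (trans a o β).2.length ≤ 2
  bot_stays : ∀ a o, ∃ μ : List Γ, (trans a o bot).2 = μ ++ [bot] ∧ bot ∉ μ
  no_bot : ∀ a o β, β ≠ bot → bot ∉ (trans a o β).2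

namespace DPDA

variable {α : Type*} (P : DPDA α)

/-- One transition on a configuration (state, stack). -/
def stepConf (a : α) : P.Ω × List P.Γ → P.Ω × List P.Γ
  | (o, []) => (o, [])
  | (o, γ :: μ) => ((P.trans a o γ).1, (P.trans a o γ).2 ++ μ)

/-- Run the automaton on a word from a configuration. -/
def evalFrom (c : P.Ω × List P.Γ) (w : List α) : P.Ω × List P.Γ :=
  w.foldl (fun c a => P.stepConf a c) c

/-- The language recognized by the automaton: words whose run from the initial
state with stack reduced to the bottom symbol ends in a terminal state. -/
def accepts : Language α :=
  {w : List α | (P.evalFrom (P.init, [P.bot]) w).1 ∈ P.final}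

end DPDA


namespace ZZAux
set_option linter.unusedSectionVars false
open TuringMachine

variable {A Q : Type*}

variable (M : TuringMachine A Q)

/-- Run state: partial tape, position, predicted next machine state. -/
abbrev RS (A Q : Type*) := (ℤ → Option A) × ℤ × Option Q

def stepR (s : RS A Q) (c : A × Q) : RS A Q :=
  (Function.update s.1 s.2.1 (some (M.δ c.1 c.2).1),
   s.2.1 + dir (M.δ c.1 c.2).2.2, some (M.δ c.1 c.2).2.1)

def R (w : List (A × Q)) : RS A Q := w.foldl (stepR M) (fun _ => none, 0, none)

lemma R_append (w v : List (A × Q)) : R M (w ++ v) = v.foldl (stepR M) (R M w) := by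
  simp [R, List.foldl_append]

lemma R_snoc (w : List (A × Q)) (c : A × Q) :
    R M (w ++ [c]) = stepR M (R M w) c := by
  simp [R_append]

lemma take_snoc_of_le {w : List (A × Q)} {c : A × Q} {j : ℕ} (h : j ≤ w.length) :
    (w ++ [c]).take j = w.take j := by
  exact List.take_append_of_le_length h

lemma R_take_succ (w : List (A × Q)) {j : ℕ} (h : j < w.length) :
    R M (w.take (j + 1)) = stepR M (R M (w.take j)) (w.get ⟨j, h⟩) := by
  conv_lhs => rw [List.take_succ, List.getElem?_eq_getElem h]
  rw [Option.toList_some, R_snoc]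
  simp [List.get_eq_getElem]

/-- Position at time `j` in the canonical run of `w`. -/
def Pt (w : List (A × Q)) (j : ℕ) : ℤ := (R M (w.take j)).2.1

lemma Pt_zero (w : List (A × Q)) : Pt M w 0 = 0 := by simp [Pt, R]

lemma Pt_snoc {w : List (A × Q)} {c : A × Q} {j : ℕ} (h : j ≤ w.length) :
    Pt M (w ++ [c]) j = Pt M w j := by
  simp [Pt, take_snoc_of_le h]

lemma Pt_len (w : List (A × Q)) : Pt M w w.length = (R M w).2.1 := by
  simp [Pt]

/-- Local consistency of the next letter with a run state. -/
def Ok (s : RS A Q) (c : A × Q) : Prop :=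
  (∀ q₀, s.2.2 = some q₀ → c.2 = q₀) ∧ (∀ a₀, s.1 s.2.1 = some a₀ → c.1 = a₀)

/-- Global consistency of a word. -/
def Consis (w : List (A × Q)) : Prop :=
  ∀ j (h : j < w.length), Ok (R M (w.take j)) (w.get ⟨j, h⟩)

lemma consis_nil : Consis M [] := by
  intro j h; simp at h

lemma consis_snoc {w : List (A × Q)} {c : A × Q} :
    Consis M (w ++ [c]) ↔ Consis M w ∧ Ok (R M w) c := by
  constructor
  · intro h
    refine ⟨fun j hj => ?_, ?_⟩
    · have h2 := h j (by simp; omega)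
      simp only [List.get_eq_getElem, Fin.val_mk, take_snoc_of_le hj.le,
        List.getElem_append_left hj] at h2 ⊢
      exact h2
    · have h2 := h w.length (by simp)
      simp only [List.get_eq_getElem, Fin.val_mk, take_snoc_of_le le_rfl,
        List.take_length, List.getElem_concat_length] at h2
      exact h2
  · rintro ⟨h1, h2⟩ j hj
    have hj' : j < w.length + 1 := by simpa using hj
    rcases lt_or_ge j w.length with hlt | hge
    · have h3 := h1 j hlt
      simp only [List.get_eq_getElem] at h3
      simp only [List.get_eq_getElem, Fin.val_mk, take_snoc_of_le hlt.le,
        List.getElem_append_left hlt]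
      exact h3
    · have hj2 : j = w.length := by omega
      subst hj2
      simp only [List.get_eq_getElem, Fin.val_mk, take_snoc_of_le le_rfl,
        List.take_length, List.getElem_concat_length]
      exact h2

lemma persist_tape {v : List (A × Q)} {s : RS A Q} {c : ℤ} (h : (s.1 c).isSome) :
    ((v.foldl (stepR M) s).1 c).isSome := by
  induction v generalizing s with
  | nil => exact h
  | cons hd tl ih =>
      apply ih
      simp only [stepR]
      rcases eq_or_ne c s.2.1 with rfl | hne
      · simp
      · simpa [Function.update_of_ne hne]

lemma written_of_visit {w : List (A × Q)} {s : ℕ} (hs : s < w.length) :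
    ((R M w).1 (Pt M w s)).isSome := by
  have h1 : R M w = (w.drop (s+1)).foldl (stepR M) (R M (w.take (s+1))) := by
    conv_lhs => rw [show w = w.take (s+1) ++ w.drop (s+1) from (List.take_append_drop _ _).symm]
    rw [R_append]
  rw [h1]
  apply persist_tape
  rw [R_take_succ M w hs]
  simp [stepR, Pt]

lemma Pt_take {w : List (A × Q)} {s j : ℕ} (h : s ≤ j) :
    Pt M (w.take j) s = Pt M w s := by
  simp [Pt, List.take_take, Nat.min_eq_left h]

lemma written_lt {w : List (A × Q)} {s j : ℕ} (hs : s < j) (hj : j ≤ w.length)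
    (z : ℤ) (hz : Pt M w s = z) : ((R M (w.take j)).1 z).isSome := by
  have hlen : s < (w.take j).length := by
    rw [List.length_take]; omega
  have := written_of_visit M (w := w.take j) hlen
  rwa [Pt_take M hs.le, hz] at this

section ActiveSec

variable (Nb : ℕ)

/-- The cell `c` has been visited during the run of `w` and the head stayed
within distance `Nb` of it ever since (so its content is still in the window). -/
def Active (w : List (A × Q)) (c : ℤ) : Prop :=
  ∃ s, s < w.length ∧ Pt M w s = c ∧
    ∀ u, s < u → u ≤ w.length → (Pt M w u - c).natAbs ≤ Nb

lemma active_written {w : List (A × Q)} {c : ℤ} (h : Active M Nb w c) :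
    ((R M w).1 c).isSome := by
  obtain ⟨s, hs, rfl, -⟩ := h
  exact written_of_visit M hs

lemma active_nil {c : ℤ} : ¬ Active M Nb [] c := by
  rintro ⟨s, hs, -⟩; simp at hs

lemma active_last_le {w : List (A × Q)} {c : ℤ} (h : Active M Nb w c) :
    ((R M w).2.1 - c).natAbs ≤ Nb := by
  obtain ⟨s, hs, -, hu⟩ := h
  have := hu w.length hs le_rfl
  rwa [Pt_len] at this

lemma active_snoc {w : List (A × Q)} {c : A × Q} {z : ℤ} :
    Active M Nb (w ++ [c]) z ↔
      ((R M (w ++ [c])).2.1 - z).natAbs ≤ Nb ∧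
        (Active M Nb w z ∨ (R M w).2.1 = z) := by
  have hlen : (w ++ [c]).length = w.length + 1 := by simp
  have hPtN : Pt M (w ++ [c]) (w.length + 1) = (R M (w ++ [c])).2.1 := by
    rw [← hlen, Pt_len]
  constructor
  · rintro ⟨s, hs, hPs, hu⟩
    rw [hlen] at hs
    have hnew : ((R M (w ++ [c])).2.1 - z).natAbs ≤ Nb := by
      have := hu (w.length + 1) (by omega) (by omega)
      rwa [hPtN] at this
    refine ⟨hnew, ?_⟩
    rcases lt_or_ge s w.length with hlt | hge
    · left
      refine ⟨s, hlt, by rwa [Pt_snoc M hlt.le] at hPs, fun u h1 h2 => ?_⟩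
      have := hu u h1 (by omega)
      rwa [Pt_snoc M h2] at this
    · right
      have hseq : s = w.length := by omega
      subst hseq
      rw [Pt_snoc M le_rfl, Pt_len] at hPs
      exact hPs
  · rintro ⟨hnew, hor | heq⟩
    · obtain ⟨s, hs, hPs, hu⟩ := hor
      refine ⟨s, by omega, by rwa [Pt_snoc M hs.le], fun u h1 h2 => ?_⟩
      rcases lt_or_ge u (w.length + 1) with hu2 | hu2
      · have h3 : u ≤ w.length := by omega
        rw [Pt_snoc M h3]
        exact hu u h1 h3
      · have : u = w.length + 1 := by omega
        subst this
        rwa [hPtN]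
    · refine ⟨w.length, by omega, ?_, fun u h1 h2 => ?_⟩
      · rw [Pt_snoc M le_rfl, Pt_len]; exact heq
      · have : u = w.length + 1 := by omega
        subst this
        rwa [hPtN]

end ActiveSec

/-- The canonical run of a genuine trace word matches the actual orbit. -/
lemma run_invariant {w : List (A × Q)} {x : Config A Q}
    (hx : ∀ j (h : j < w.length), w.get ⟨j, h⟩ = M.trace x j) :
    ∀ j, j ≤ w.length →
      ((M.step)^[j] x).2.2 = x.2.2 + Pt M w j ∧
      (∀ q₀, (R M (w.take j)).2.2 = some q₀ → ((M.step)^[j] x).2.1 = q₀) ∧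
      (∀ z a, (R M (w.take j)).1 z = some a → ((M.step)^[j] x).1 (x.2.2 + z) = a) := by
  intro j
  induction j with
  | zero =>
      intro _
      refine ⟨by simp [Pt_zero], ?_, ?_⟩
      · intro q₀ h; simp [R] at h
      · intro z a h; simp [R] at h
  | succ j ih =>
      intro hj1
      have hj : j < w.length := by omega
      obtain ⟨hpos, hq, htape⟩ := ih (by omega)
      set y := (M.step)^[j] x with hy
      have hw : w.get ⟨j, hj⟩ = (y.1 y.2.2, y.2.1) := hx j hj
      have hw1 : (w.get ⟨j, hj⟩).1 = y.1 y.2.2 := by rw [hw]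
      have hw2 : (w.get ⟨j, hj⟩).2 = y.2.1 := by rw [hw]
      have hstep : (M.step)^[j+1] x = M.step y := by
        rw [Function.iterate_succ_apply']
      have hR : R M (w.take (j+1)) = stepR M (R M (w.take j)) (w.get ⟨j, hj⟩) :=
        R_take_succ M w hj
      have hPt1 : Pt M w (j+1) =
          Pt M w j + dir (M.δ (w.get ⟨j, hj⟩).1 (w.get ⟨j, hj⟩).2).2.2 := by
        show (R M (w.take (j+1))).2.1 = _
        rw [hR]; rfl
      have hδ : M.δ (w.get ⟨j, hj⟩).1 (w.get ⟨j, hj⟩).2 = M.δ (y.1 y.2.2) y.2.1 := by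
        rw [hw1, hw2]
      refine ⟨?_, ?_, ?_⟩
      · rw [hstep, hPt1]
        show y.2.2 + dir (M.δ (y.1 y.2.2) y.2.1).2.2 = _
        rw [← hδ, hpos]
        ring
      · intro q₀ h
        rw [hR] at h
        simp only [stepR] at h
        rw [hstep]
        show (M.δ (y.1 y.2.2) y.2.1).2.1 = q₀
        rw [← hδ]
        exact (Option.some_injective _ h)
      · intro z a h
        rw [hR] at h
        simp only [stepR] at h
        rw [hstep]
        show Function.update y.1 y.2.2 (M.δ (y.1 y.2.2) y.2.1).1 (x.2.2 + z) = a
        rcases eq_or_ne z (R M (w.take j)).2.1 with rfl | hne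
        · rw [Function.update_self] at h
          have hz : x.2.2 + (R M (w.take j)).2.1 = y.2.2 := by
            rw [hpos]; rfl
          rw [hz, Function.update_self, ← hδ]
          exact (Option.some_injective _ h).symm ▸ (Option.some_injective _ h) ▸ rfl
        · rw [Function.update_of_ne hne] at h
          have hz : x.2.2 + z ≠ y.2.2 := by
            rw [hpos]
            intro hcon
            apply hne
            have : z = Pt M w j := by omega
            exact this
          rw [Function.update_of_ne hz]
          exact htape z a h

/-- Genuine trace words are consistent. -/
lemma consis_of_trace {w : List (A × Q)} {x : Config A Q}
    (hx : ∀ j (h : j < w.length), w.get ⟨j, h⟩ = M.trace x j) : Consis M w := by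
  intro j hj
  obtain ⟨hpos, hq, htape⟩ := run_invariant M hx j hj.le
  have hw : w.get ⟨j, hj⟩ = M.trace x j := hx j hj
  constructor
  · intro q₀ h
    rw [hw]
    show ((M.step)^[j] x).2.1 = q₀
    exact hq q₀ h
  · intro a₀ h
    rw [hw]
    show ((M.step)^[j] x).1 ((M.step)^[j] x).2.2 = a₀
    have := htape _ a₀ h
    have hp : x.2.2 + (R M (w.take j)).2.1 = ((M.step)^[j] x).2.2 := by
      rw [hpos]; rfl
    rwa [hp] at this

/-- Any consistent word is realized as a trace of an actual configuration. -/
lemma exists_config_of_consis [Nonempty A] [Nonempty Q] {w : List (A × Q)}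
    (hc : Consis M w) :
    ∃ x : Config A Q, x.2.2 = 0 ∧ ∀ j (h : j < w.length), w.get ⟨j, h⟩ = M.trace x j := by
  classical
  obtain ⟨T0, hT0⟩ : ∃ T0 : ℤ → A, ∀ z, T0 z =
      if h : ∃ j, j < w.length ∧ Pt M w j = z then
        (w.get ⟨Nat.find h, (Nat.find_spec h).1⟩).1
      else Classical.arbitrary A := ⟨_, fun _ => rfl⟩
  obtain ⟨q0, hq0⟩ : ∃ q0 : Q, q0 =
      if h : 0 < w.length then (w.get ⟨0, h⟩).2 else Classical.arbitrary Q :=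
    ⟨_, rfl⟩
  set x : Config A Q := (T0, q0, 0) with hxdef
  have symb : ∀ j (hj : j < w.length),
      (∀ z, ((R M (w.take j)).1 z = none → ((M.step)^[j] x).1 z = T0 z) ∧
        (∀ a, (R M (w.take j)).1 z = some a → ((M.step)^[j] x).1 z = a)) →
      ((M.step)^[j] x).1 (Pt M w j) = (w.get ⟨j, hj⟩).1 := by
    intro j hj htape
    rcases hcase : (R M (w.take j)).1 (Pt M w j) with _ | a
    · have h1 := (htape (Pt M w j)).1 hcase
      rw [h1, hT0]
      have hex : ∃ k, k < w.length ∧ Pt M w k = Pt M w j := ⟨j, hj, rfl⟩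
      rw [dif_pos hex]
      have hle : Nat.find hex ≤ j := Nat.find_min' hex ⟨hj, rfl⟩
      rcases eq_or_lt_of_le hle with heq | hlt
      · simp only [heq]
      · exfalso
        have hfind := Nat.find_spec hex
        have hsome := written_lt M hlt hj.le _ hfind.2
        rw [hcase] at hsome
        simp at hsome
    · have h2 := (htape (Pt M w j)).2 a hcase
      have h3 := (hc j hj).2 a hcase
      rw [h2, h3]
  have claim : ∀ j (hj : j < w.length),
      ((M.step)^[j] x).2.2 = Pt M w j ∧
      ((M.step)^[j] x).2.1 = (w.get ⟨j, hj⟩).2 ∧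
      (∀ z, ((R M (w.take j)).1 z = none → ((M.step)^[j] x).1 z = T0 z) ∧
        (∀ a, (R M (w.take j)).1 z = some a → ((M.step)^[j] x).1 z = a)) := by
    intro j
    induction j with
    | zero =>
        intro hj
        refine ⟨by simp [Pt_zero, hxdef], by simp [hxdef, hq0, dif_pos hj], fun z => ⟨?_, ?_⟩⟩
        · intro _; rfl
        · intro a h; simp [R] at h
    | succ j ih =>
        intro hj1
        have hj : j < w.length := by omega
        obtain ⟨hpos, hstate, htape⟩ := ih hj
        have hsym := symb j hj htape
        set y := (M.step)^[j] x with hy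
        have hstep : (M.step)^[j+1] x = M.step y := Function.iterate_succ_apply' _ _ _
        have hR : R M (w.take (j+1)) = stepR M (R M (w.take j)) (w.get ⟨j, hj⟩) :=
          R_take_succ M w hj
        have hhead : y.1 y.2.2 = (w.get ⟨j, hj⟩).1 := by rw [hpos]; exact hsym
        have hδ : M.δ (y.1 y.2.2) y.2.1 = M.δ (w.get ⟨j, hj⟩).1 (w.get ⟨j, hj⟩).2 := by
          rw [hhead, hstate]
        have hPt1 : Pt M w (j+1) =
            Pt M w j + dir (M.δ (w.get ⟨j, hj⟩).1 (w.get ⟨j, hj⟩).2).2.2 := by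
          show (R M (w.take (j+1))).2.1 = _
          rw [hR]; rfl
        have hq1 : (R M (w.take (j+1))).2.2 =
            some (M.δ (w.get ⟨j, hj⟩).1 (w.get ⟨j, hj⟩).2).2.1 := by
          rw [hR]; rfl
        refine ⟨?_, ?_, ?_⟩
        · rw [hstep, hPt1]
          show y.2.2 + dir (M.δ (y.1 y.2.2) y.2.1).2.2 = _
          rw [hδ, hpos]
        · rw [hstep]
          show (M.δ (y.1 y.2.2) y.2.1).2.1 = _
          rw [hδ]
          exact ((hc (j+1) hj1).1 _ hq1).symm
        · intro z
          rw [hstep]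
          have hupdR : (R M (w.take (j+1))).1 =
              Function.update (R M (w.take j)).1 (Pt M w j)
                (some (M.δ (w.get ⟨j, hj⟩).1 (w.get ⟨j, hj⟩).2).1) := by
            rw [hR]; rfl
          have hupdx : (M.step y).1 =
              Function.update y.1 (Pt M w j) (M.δ (w.get ⟨j, hj⟩).1 (w.get ⟨j, hj⟩).2).1 := by
            show Function.update y.1 y.2.2 (M.δ (y.1 y.2.2) y.2.1).1 = _
            rw [hδ, hpos]
          rw [hupdR, hupdx]
          rcases eq_or_ne z (Pt M w j) with rfl | hne
          · constructor
            · intro h; rw [Function.update_self] at h; exact absurd h (by simp)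
            · intro a h
              rw [Function.update_self] at h ⊢
              exact Option.some_injective _ h
          · rw [Function.update_of_ne hne, Function.update_of_ne hne]
            exact htape z
  refine ⟨x, rfl, fun j hj => ?_⟩
  obtain ⟨hpos, hstate, htape⟩ := claim j hj
  have hsym := symb j hj htape
  show w.get ⟨j, hj⟩ = (((M.step)^[j] x).1 ((M.step)^[j] x).2.2, ((M.step)^[j] x).2.1)
  rw [hpos, hsym, hstate]

section ZZ

variable {Nb : ℕ}
variable (hzz : ∀ (x : Config A Q) (i : ℤ) (W t₁ t₂ : ℕ),
      Nb < W → 0 < t₁ → t₁ < t₂ → x.2.2 = i →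
      (M.pos t₁ x = i + W ∨ M.pos t₁ x = i - W) → M.pos t₂ x ≠ i)

include hzz

/-- hzz consequence: in a consistent word, the head never returns to a cell
after having been at distance `> Nb` from it. -/
lemma no_big_return {w : List (A × Q)} (hc : Consis M w) {i t₁ t₂ : ℕ}
    (h1 : i < t₁) (h2 : t₁ < t₂) (h3 : t₂ ≤ w.length)
    (hW : (Nb : ℤ) < |Pt M w t₁ - Pt M w i|) : Pt M w t₂ ≠ Pt M w i := by
  have hlen : 0 < w.length := by omega
  haveI : Nonempty A := ⟨(w.get ⟨0, hlen⟩).1⟩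
  haveI : Nonempty Q := ⟨(w.get ⟨0, hlen⟩).2⟩
  obtain ⟨x, hx0, hx⟩ := exists_config_of_consis M hc
  have hpos : ∀ j, j ≤ w.length → ((M.step)^[j] x).2.2 = x.2.2 + Pt M w j := fun j hj =>
    (run_invariant M hx j hj).1
  have key : ∀ t, i ≤ t → M.pos (t - i) ((M.step)^[i] x) = ((M.step)^[t] x).2.2 := by
    intro t ht
    show ((M.step)^[t-i] ((M.step)^[i] x)).2.2 = ((M.step)^[t] x).2.2
    rw [← Function.iterate_add_apply, Nat.sub_add_cancel ht]
  set W : ℕ := (Pt M w t₁ - Pt M w i).natAbs with hWdef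
  have hNW : Nb < W := by
    rw [Int.abs_eq_natAbs] at hW
    exact_mod_cast hW
  have hzz' := hzz ((M.step)^[i] x) (x.2.2 + Pt M w i) W (t₁ - i) (t₂ - i)
    hNW (by omega) (by omega) (hpos i (by omega)) ?_
  · intro hcon
    apply hzz'
    rw [key t₂ (by omega), hpos t₂ h3, hcon]
  · rw [key t₁ (by omega), hpos t₁ (by omega)]
    rcases Int.natAbs_eq (Pt M w t₁ - Pt M w i) with h | h
    · left; rw [← hWdef] at h; omega
    · right; rw [← hWdef] at h; omega

omit hzz in
lemma visit_of_written {w : List (A × Q)} {z : ℤ} (h : ((R M w).1 z).isSome) :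
    ∃ s, s < w.length ∧ Pt M w s = z := by
  induction w using List.reverseRecOn with
  | nil => simp [R] at h
  | append_singleton w c ih =>
      rw [R_snoc] at h
      simp only [stepR] at h
      rcases eq_or_ne z (R M w).2.1 with rfl | hne
      · refine ⟨w.length, by simp, ?_⟩
        rw [Pt_snoc M le_rfl, Pt_len]
      · rw [Function.update_of_ne hne] at h
        obtain ⟨s, hs, hPs⟩ := ih h
        exact ⟨s, by simp; omega, by rwa [Pt_snoc M hs.le]⟩

/-- hzz consequence: if the current cell was written during the run, it is
still active (its content is in the radius-`Nb` window). -/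
lemma active_of_written {w : List (A × Q)} (hc : Consis M w)
    (hw : ((R M w).1 ((R M w).2.1)).isSome) : Active M Nb w ((R M w).2.1) := by
  by_contra hact
  obtain ⟨s, hs, hPs⟩ := visit_of_written M hw
  have hu : ∃ u, s < u ∧ u ≤ w.length ∧ Nb < (Pt M w u - (R M w).2.1).natAbs := by
    by_contra hcon
    push_neg at hcon
    exact hact ⟨s, hs, hPs, fun u h1 h2 => hcon u h1 h2⟩
  obtain ⟨u, hu1, hu2, hu3⟩ := hu
  have hune : u ≠ w.length := by
    intro h; subst h; rw [Pt_len] at hu3; simp at hu3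
  have hnr := no_big_return M hzz hc (i := s) (t₁ := u) (t₂ := w.length)
    hu1 (by omega) le_rfl ?_
  · exact hnr (by rw [Pt_len, hPs])
  · rw [hPs, Int.abs_eq_natAbs]
    exact_mod_cast hu3

end ZZ

section Automaton

variable [Fintype A] [Fintype Q] (Nb : ℕ)

/-- Automaton states: a predicted machine state and a window of known tape
contents at offsets `-Nb..Nb` around the head (index `i` is offset `i - Nb`). -/
abbrev St (A Q : Type*) [Fintype A] [Fintype Q] (Nb : ℕ) : Type :=
  Option (Fin (Fintype.card Q)) × (Fin (2*Nb+1) → Option (Fin (Fintype.card A)))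

/-- Window lookup at an arbitrary (possibly out-of-range) index. -/
def getG (G : Fin (2*Nb+1) → Option (Fin (Fintype.card A))) (k : ℤ) :
    Option (Fin (Fintype.card A)) :=
  if h : 0 ≤ k ∧ k < 2*Nb+1 then G ⟨k.toNat, by omega⟩ else none

/-- The automaton transition. -/
noncomputable def fA (c : A × Q) (o : Option (St A Q Nb)) : Option (St A Q Nb) :=
  o.bind fun s =>
    if (s.1 = none ∨ s.1 = some ((Fintype.equivFin Q) c.2)) ∧
       (getG (A := A) Nb s.2 Nb = none ∨
         getG (A := A) Nb s.2 Nb = some ((Fintype.equivFin A) c.1)) then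
      some (some ((Fintype.equivFin Q) (M.δ c.1 c.2).2.1),
        fun i => if ((i : ℕ) : ℤ) + dir (M.δ c.1 c.2).2.2 = (Nb : ℤ) then
            some ((Fintype.equivFin A) (M.δ c.1 c.2).1)
          else getG (A := A) Nb s.2 (((i : ℕ) : ℤ) + dir (M.δ c.1 c.2).2.2))
    else none

lemma fA_none (c : A × Q) : fA M Nb c none = none := rfl

lemma fA_some (c : A × Q) (st : St A Q Nb) :
    fA M Nb c (some st) =
      if (st.1 = none ∨ st.1 = some ((Fintype.equivFin Q) c.2)) ∧
         (getG (A := A) Nb st.2 Nb = none ∨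
           getG (A := A) Nb st.2 Nb = some ((Fintype.equivFin A) c.1)) then
        some (some ((Fintype.equivFin Q) (M.δ c.1 c.2).2.1),
          fun (i : Fin (2*Nb+1)) => if ((i : ℕ) : ℤ) + dir (M.δ c.1 c.2).2.2 = (Nb : ℤ) then
              some ((Fintype.equivFin A) (M.δ c.1 c.2).1)
            else getG (A := A) Nb st.2 (((i : ℕ) : ℤ) + dir (M.δ c.1 c.2).2.2))
      else none := rfl

/-- The automaton run on a word. -/
noncomputable def runA (w : List (A × Q)) : Option (St A Q Nb) :=
  w.foldl (fun s c => fA M Nb c s) (some (none, fun _ => none))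

lemma runA_snoc (w : List (A × Q)) (c : A × Q) :
    runA M Nb (w ++ [c]) = fA M Nb c (runA M Nb w) := by
  simp [runA, List.foldl_append]

open Classical in
/-- The ideal window contents after running `w`. -/
noncomputable def Gw (w : List (A × Q)) : Fin (2*Nb+1) → Option (Fin (Fintype.card A)) :=
  fun i => if Active M Nb w ((R M w).2.1 + ((i : ℕ) : ℤ) - Nb) then
      ((R M w).1 ((R M w).2.1 + ((i : ℕ) : ℤ) - Nb)).map (Fintype.equivFin A)
    else none

/-- The ideal automaton state after running `w`. -/
noncomputable def Dw (w : List (A × Q)) : St A Q Nb :=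
  ((R M w).2.2.map (Fintype.equivFin Q), Gw M Nb w)

open Classical in
lemma getG_Gw (w : List (A × Q)) (k : ℤ) :
    getG (A := A) Nb (Gw M Nb w) k =
      if Active M Nb w ((R M w).2.1 + k - Nb) then
        ((R M w).1 ((R M w).2.1 + k - Nb)).map (Fintype.equivFin A)
      else none := by
  unfold getG
  split
  case isTrue h =>
    have hcast : (((⟨k.toNat, by omega⟩ : Fin (2*Nb+1)) : ℕ) : ℤ) = k := by
      simp; omega
    show Gw M Nb w ⟨k.toNat, by omega⟩ = _
    simp only [Gw, hcast]
  case isFalse h =>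
    rw [if_neg]
    intro hact
    have hle := active_last_le M Nb hact
    have : ((R M w).2.1 - ((R M w).2.1 + k - Nb)).natAbs ≤ Nb := hle
    omega


/-- The simulation invariant: on consistent words the automaton run computes
the ideal data. -/
lemma runA_eq_of_consis {w : List (A × Q)} (hc : Consis M w) :
    runA M Nb w = some (Dw M Nb w) := by
  induction w using List.reverseRecOn with
  | nil =>
      have h1 : Gw M Nb ([] : List (A × Q)) = fun _ => none := by
        funext i
        exact if_neg (active_nil M Nb)
      simp [runA, Dw, h1, R]
  | append_singleton w c ih =>
      rw [consis_snoc] at hc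
      obtain ⟨hcw, hok⟩ := hc
      rw [runA_snoc, ih hcw, fA_some]
      have hqok : (Dw M Nb w).1 = none ∨
          (Dw M Nb w).1 = some ((Fintype.equivFin Q) c.2) := by
        rcases hq : (R M w).2.2 with _ | q₀
        · left; simp [Dw, hq]
        · right; simp [Dw, hq, hok.1 q₀ hq]
      have hcenterarg : (R M w).2.1 + (Nb : ℤ) - Nb = (R M w).2.1 := by ring
      have hcenter : getG (A := A) Nb (Dw M Nb w).2 Nb = none ∨
          getG (A := A) Nb (Dw M Nb w).2 Nb = some ((Fintype.equivFin A) c.1) := by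
        show getG (A := A) Nb (Gw M Nb w) Nb = none ∨
          getG (A := A) Nb (Gw M Nb w) Nb = some ((Fintype.equivFin A) c.1)
        rw [getG_Gw, hcenterarg]
        by_cases hact : Active M Nb w (R M w).2.1
        · rw [if_pos hact]
          obtain ⟨a₀, ha₀⟩ := Option.isSome_iff_exists.mp (active_written M Nb hact)
          right
          rw [ha₀, hok.2 a₀ ha₀]
          rfl
        · left; rw [if_neg hact]
      rw [if_pos ⟨hqok, hcenter⟩]
      congr 1
      have hR' : R M (w ++ [c]) = stepR M (R M w) c := R_snoc M w c
      refine Prod.ext ?_ ?_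
      · show some ((Fintype.equivFin Q) (M.δ c.1 c.2).2.1) =
          (R M (w ++ [c])).2.2.map (Fintype.equivFin Q)
        rw [hR']
        rfl
      · show (fun (i : Fin (2*Nb+1)) => if ((i : ℕ) : ℤ) + dir (M.δ c.1 c.2).2.2 = (Nb : ℤ) then
              some ((Fintype.equivFin A) (M.δ c.1 c.2).1)
            else getG (A := A) Nb (Dw M Nb w).2 (((i : ℕ) : ℤ) + dir (M.δ c.1 c.2).2.2)) =
          Gw M Nb (w ++ [c])
        funext i
        have hi2 : ((i : ℕ) : ℤ) < 2*Nb+1 := by exact_mod_cast i.2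
        have hi0 : (0 : ℤ) ≤ ((i : ℕ) : ℤ) := by positivity
        set d : ℤ := dir (M.δ c.1 c.2).2.2 with hd
        have hd1 : d = 1 ∨ d = -1 := by
          rw [hd, dir]; split <;> simp
        have hP' : (R M (w ++ [c])).2.1 = (R M w).2.1 + d := by rw [hR']; rfl
        have htape' : (R M (w ++ [c])).1 =
            Function.update (R M w).1 (R M w).2.1 (some (M.δ c.1 c.2).1) := by
          rw [hR']; rfl
        have hnatabs : ((R M (w ++ [c])).2.1 -
            ((R M (w ++ [c])).2.1 + ((i : ℕ) : ℤ) - Nb)).natAbs ≤ Nb := by omega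
        have hActIff : Active M Nb (w ++ [c])
              ((R M (w ++ [c])).2.1 + ((i : ℕ) : ℤ) - Nb) ↔
            (Active M Nb w ((R M (w ++ [c])).2.1 + ((i : ℕ) : ℤ) - Nb) ∨
             (R M w).2.1 = (R M (w ++ [c])).2.1 + ((i : ℕ) : ℤ) - Nb) := by
          rw [active_snoc]
          exact and_iff_right hnatabs
        show _ = Gw M Nb (w ++ [c]) i
        simp only [Gw]
        by_cases hk : ((i : ℕ) : ℤ) + d = (Nb : ℤ)
        · have hzP : (R M (w ++ [c])).2.1 + ((i : ℕ) : ℤ) - Nb = (R M w).2.1 := by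
            rw [hP']; omega
          rw [if_pos hk, if_pos (hActIff.mpr (Or.inr hzP.symm)), htape', hzP,
            Function.update_self]
          rfl
        · have hzP : (R M w).2.1 ≠ (R M (w ++ [c])).2.1 + ((i : ℕ) : ℤ) - Nb := by
            rw [hP']; omega
          rw [if_neg hk]
          show getG (A := A) Nb (Gw M Nb w) (((i : ℕ) : ℤ) + d) = _
          rw [getG_Gw]
          have hE : (R M w).2.1 + (((i : ℕ) : ℤ) + d) - Nb =
              (R M (w ++ [c])).2.1 + ((i : ℕ) : ℤ) - Nb := by
            rw [hP']; ring
          rw [hE]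
          by_cases hact : Active M Nb w ((R M (w ++ [c])).2.1 + ((i : ℕ) : ℤ) - Nb)
          · rw [if_pos hact, if_pos (hActIff.mpr (Or.inl hact)), htape',
              Function.update_of_ne (Ne.symm hzP)]
          · rw [if_neg hact, if_neg (by rw [hActIff]; simp [hact, hzP])]

/-- Accepted words are consistent (uses the zigzag bound through
`active_of_written`). -/
lemma consis_of_runA
    (hzz : ∀ (x : Config A Q) (i : ℤ) (W t₁ t₂ : ℕ),
      Nb < W → 0 < t₁ → t₁ < t₂ → x.2.2 = i →
      (M.pos t₁ x = i + W ∨ M.pos t₁ x = i - W) → M.pos t₂ x ≠ i)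
    {w : List (A × Q)} (h : runA M Nb w ≠ none) : Consis M w := by
  induction w using List.reverseRecOn with
  | nil => exact consis_nil M
  | append_singleton w c ih =>
      rw [runA_snoc] at h
      have hw : runA M Nb w ≠ none := by
        intro hcon
        rw [hcon, fA_none] at h
        exact h rfl
      have hcw := ih hw
      rw [runA_eq_of_consis M Nb hcw, fA_some] at h
      by_cases hcond : ((Dw M Nb w).1 = none ∨
            (Dw M Nb w).1 = some ((Fintype.equivFin Q) c.2)) ∧
          (getG (A := A) Nb (Dw M Nb w).2 Nb = none ∨
            getG (A := A) Nb (Dw M Nb w).2 Nb = some ((Fintype.equivFin A) c.1))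
      · rw [consis_snoc]
        refine ⟨hcw, ?_, ?_⟩
        · intro q₀ hq₀
          rcases hcond.1 with h1 | h1
          · exfalso
            have : (Dw M Nb w).1 = some ((Fintype.equivFin Q) q₀) := by
              show (R M w).2.2.map (Fintype.equivFin Q) = _
              rw [hq₀]; rfl
            rw [this] at h1; exact Option.some_ne_none _ h1
          · have h2 : (Dw M Nb w).1 = some ((Fintype.equivFin Q) q₀) := by
              show (R M w).2.2.map (Fintype.equivFin Q) = _
              rw [hq₀]; rfl
            rw [h2] at h1
            have := Option.some_injective _ h1
            exact ((Fintype.equivFin Q).injective this).symm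
        · intro a₀ ha₀
          have hcenterarg : (R M w).2.1 + (Nb : ℤ) - Nb = (R M w).2.1 := by ring
          have hact : Active M Nb w (R M w).2.1 :=
            active_of_written M hzz hcw (by rw [ha₀]; rfl)
          have hcval : getG (A := A) Nb (Dw M Nb w).2 Nb =
              some ((Fintype.equivFin A) a₀) := by
            show getG (A := A) Nb (Gw M Nb w) Nb = _
            rw [getG_Gw, hcenterarg, if_pos hact, ha₀]
            rfl
          rcases hcond.2 with h1 | h1
          · rw [hcval] at h1; exact absurd h1 (Option.some_ne_none _)
          · rw [hcval] at h1
            have := Option.some_injective _ h1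
            exact ((Fintype.equivFin A).injective this).symm
      · rw [if_neg hcond] at h
        exact absurd rfl h

end Automaton

/-- Characterization of the trace language by consistency. -/
lemma mem_langST_iff [Nonempty A] [Nonempty Q] (w : List (A × Q)) :
    w ∈ M.langST ↔ Consis M w := by
  constructor
  · rintro ⟨x, m, hx⟩
    apply consis_of_trace M (x := (M.step)^[m] x)
    intro j hj
    rw [hx j hj]
    have hiter : (M.step)^[m + j] x = (M.step)^[j] ((M.step)^[m] x) := by
      rw [add_comm, Function.iterate_add_apply]
    simp [TuringMachine.trace, hiter]
  · intro hc
    obtain ⟨x, -, hx⟩ := exists_config_of_consis M hc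
    exact ⟨x, 0, fun j hj => by rw [zero_add]; exact hx j hj⟩

/-- The DPDA (with trivial stack) implementing the window automaton. -/
noncomputable def autP [Fintype A] [Fintype Q] (Nb : ℕ) : DPDA (A × Q) where
  Ω := Option (St A Q Nb)
  Γ := Unit
  finΩ := inferInstance
  finΓ := inferInstance
  bot := ()
  init := some (none, fun _ => none)
  final := {o | o ≠ none}
  trans := fun c o _ => (fA M Nb c o, [()])
  len_le := by intros; simp
  bot_stays := by intro a o; exact ⟨[], rfl, by simp⟩
  no_bot := by intro a o β hβ; exact absurd rfl hβ

lemma autP_eval [Fintype A] [Fintype Q] (Nb : ℕ) (w : List (A × Q))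
    (s : Option (St A Q Nb)) :
    (autP M Nb).evalFrom (s, [()]) w =
      (w.foldl (fun s c => fA M Nb c s) s, [()]) := by
  induction w generalizing s with
  | nil => rfl
  | cons c t ih =>
      have h1 : (autP M Nb).evalFrom (s, [()]) (c :: t) =
          (autP M Nb).evalFrom (fA M Nb c s, [()]) t := rfl
      rw [h1, ih]
      rfl

lemma autP_accepts [Fintype A] [Fintype Q] [Nonempty A] [Nonempty Q] (Nb : ℕ)
    (hzz : ∀ (x : Config A Q) (i : ℤ) (W t₁ t₂ : ℕ),
      Nb < W → 0 < t₁ → t₁ < t₂ → x.2.2 = i →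
      (M.pos t₁ x = i + W ∨ M.pos t₁ x = i - W) → M.pos t₂ x ≠ i)
    (w : List (A × Q)) : w ∈ (autP M Nb).accepts ↔ w ∈ M.langST := by
  rw [mem_langST_iff]
  have hh : w ∈ (autP M Nb).accepts ↔ runA M Nb w ≠ none := by
    show ((autP M Nb).evalFrom ((autP M Nb).init, [(autP M Nb).bot]) w).1 ∈
      (autP M Nb).final ↔ _
    have h0 : ((autP M Nb).init, [(autP M Nb).bot]) =
        ((some (none, fun _ => none) : Option (St A Q Nb)), [()]) := rfl
    rw [h0]
    refine (Iff.of_eq (congrArg (fun p => p.1 ∈ (autP M Nb).final)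
      (autP_eval M Nb w (some (none, fun _ => none))))).trans ?_
    exact Iff.rfl
  rw [hh]
  constructor
  · exact consis_of_runA M Nb hzz
  · intro hc
    rw [runA_eq_of_consis M Nb hc]
    simp

end ZZAux

/-- If the machine is bounded-zigzag (for some N, no left or right zigzag of
width greater than N), then the language of the trace subshift S_T is
recognized by a deterministic pushdown automaton. -/

theorem langST_DPDA_of_bounded_zigzag
    {A Q : Type*} [Fintype A] [Fintype Q]
    (M : TuringMachine A Q)
    (hzz : ∃ N : ℕ, ∀ (x : TuringMachine.Config A Q) (i : ℤ) (W t₁ t₂ : ℕ),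
      N < W → 0 < t₁ → t₁ < t₂ → x.2.2 = i →
      (M.pos t₁ x = i + W ∨ M.pos t₁ x = i - W) → M.pos t₂ x ≠ i) :
    ∃ P : DPDA (A × Q), P.accepts = M.langST := by
  classical
  obtain ⟨Nb, hzz⟩ := hzz
  by_cases hne : Nonempty A ∧ Nonempty Q
  · obtain ⟨hA, hQ⟩ := hne
    refine ⟨ZZAux.autP M Nb, ?_⟩
    ext w
    exact ZZAux.autP_accepts M Nb hzz w
  · refine ⟨⟨Unit, Unit, inferInstance, inferInstance, (), (), ∅,
      fun _ _ _ => ((), [()]), by intros; simp,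
      by intro a o; exact ⟨[], rfl, by simp⟩,
      by intro a o β hβ; exact absurd rfl hβ⟩, ?_⟩
    ext w
    constructor
    · intro h
      simp only [DPDA.accepts, Set.mem_setOf_eq] at h
      exact absurd h (Set.notMem_empty _)
    · rintro ⟨x, m, hx⟩
      exact absurd ⟨⟨x.1 0⟩, ⟨x.2.1⟩⟩ hne
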